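/- The importance-weighted bound converges to log p(y): if w^k are i.i.d. nonnegative integrable random variables with mean p(y) > 0 and the weights are bounded (or uniformly integrable in the sense required for L1 convergence of averages), then E[log((1/K) Σ_{k=1}^K w^k)] → log p(y) as K → ∞. -/

import Mathlib

open MeasureTheory Filter

lemma log_lip {a x y : ℝ} (ha : 0 < a) (hx : a ≤ x) (hy : a ≤ y) :
    |Real.log x - Real.log y| ≤ |x - y| / a := by
  have key : ∀ u v : ℝ, a ≤ u → a ≤ v → v ≤ u →
      Real.log u - Real.log v ≤ (u - v) / a := by
    intro u v hu hv hvu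
    have hv0 : 0 < v := lt_of_lt_of_le ha hv
    have hu0 : 0 < u := lt_of_lt_of_le ha hu
    have h1 : Real.log u - Real.log v = Real.log (u / v) :=
      (Real.log_div hu0.ne' hv0.ne').symm
    have h2 : Real.log (u / v) ≤ u / v - 1 :=
      Real.log_le_sub_one_of_pos (div_pos hu0 hv0)
    have h3 : u / v - 1 = (u - v) / v := by field_simp
    have h4 : (u - v) / v ≤ (u - v) / a := by
      gcongr
    linarith
  rcases le_total y x with h | h
  · have := key x y hx hy h
    rw [abs_of_nonneg (by linarith [Real.log_le_log (lt_of_lt_of_le ha hy) h] :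
        (0:ℝ) ≤ Real.log x - Real.log y), abs_of_nonneg (by linarith : (0:ℝ) ≤ x - y)]
    exact this
  · have := key y x hy hx h
    rw [abs_sub_comm, abs_sub_comm x y,
      abs_of_nonneg (by linarith [Real.log_le_log (lt_of_lt_of_le ha hx) h] :
        (0:ℝ) ≤ Real.log y - Real.log x), abs_of_nonneg (by linarith : (0:ℝ) ≤ y - x)]
    exact this

lemma abs_le_eps {x ε : ℝ} (hε : 0 < ε) : |x| ≤ ε + x ^ 2 / ε := by
  have h : ε * |x| ≤ ε ^ 2 + x ^ 2 := by nlinarith [sq_nonneg (|x| - ε), sq_abs x]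
  have h2 : |x| = ε * |x| / ε := by field_simp
  rw [h2]
  calc ε * |x| / ε ≤ (ε ^ 2 + x ^ 2) / ε := by gcongr
    _ = ε + x ^ 2 / ε := by field_simp


lemma key_est {Z : Type*} [MeasurableSpace Z] (μ : Measure Z) [SigmaFinite μ]
    (q W : Z → ℝ) (py c C ε : ℝ)
    (hqm : Measurable q) (hWm : Measurable W)
    (hq0 : ∀ z, 0 ≤ q z) (hq1 : ∫ z, q z ∂μ = 1)
    (hpypos : 0 < py) (hw : ∫ z, q z * W z ∂μ = py)
    (hc : 0 < c) (hC : c ≤ C)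
    (hbdd : ∀ᵐ z ∂μ, q z ≠ 0 → c ≤ W z ∧ W z ≤ C)
    (hε : 0 < ε) (K : ℕ) (hK : 1 ≤ K) :
    |(∫ zs : Fin K → Z, (∏ i, q (zs i)) * Real.log (((1:ℝ) / K) * ∑ k, W (zs k))
        ∂(Measure.pi fun _ => μ)) - Real.log py|
      ≤ (min c py)⁻¹ * (ε + ((∫ z, q z * (W z - py) ^ 2 ∂μ) / K) / ε) := by
  letI : MeasureSpace Z := ⟨μ⟩
  have hvol : (volume : Measure Z) = μ := rfl
  set V : ℝ := ∫ z, q z * (W z - py) ^ 2 ∂μ with hVdef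
  set c' : ℝ := min c py with hc'def
  have hc' : 0 < c' := lt_min hc hpypos
  have hK0 : (0:ℝ) < (K:ℝ) := by exact_mod_cast Nat.pos_of_ne_zero (by omega)
  -- integrability facts on μ
  have hq_int : Integrable q μ := by
    by_contra h
    rw [integral_undef h] at hq1; norm_num at hq1
  have hqW_int : Integrable (fun z => q z * W z) μ := by
    apply Integrable.mono' (hq_int.const_mul C) ((hqm.mul hWm).aestronglyMeasurable)
    filter_upwards [hbdd] with z hz
    rcases eq_or_ne (q z) 0 with h0 | h0
    · simp [h0]
    · obtain ⟨h1, h2⟩ := hz h0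
      rw [Real.norm_eq_abs]
      change |q z * W z| ≤ _
      rw [abs_mul, abs_of_nonneg (hq0 z),
        abs_of_nonneg (le_of_lt (lt_of_lt_of_le hc h1))]
      calc q z * W z ≤ q z * C := mul_le_mul_of_nonneg_left h2 (hq0 z)
        _ = C * q z := mul_comm _ _
  have hD_int : Integrable (fun z => q z * (W z - py)) μ := by
    apply (hqW_int.sub (hq_int.const_mul py)).congr
    exact Filter.Eventually.of_forall fun z => by simp only [Pi.sub_apply]; ring
  have hD2_int : Integrable (fun z => q z * (W z - py) ^ 2) μ := by
    apply Integrable.mono' (hq_int.const_mul ((C + |py|) ^ 2))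
      ((hqm.mul (((hWm.sub measurable_const).pow_const 2))).aestronglyMeasurable)
    filter_upwards [hbdd] with z hz
    rcases eq_or_ne (q z) 0 with h0 | h0
    · simp [h0]
    · obtain ⟨h1, h2⟩ := hz h0
      have hb : (W z - py) ^ 2 ≤ (C + |py|) ^ 2 := by
        nlinarith [le_abs_self py, neg_abs_le py, abs_nonneg py]
      rw [Real.norm_eq_abs]
      change |q z * (W z - py) ^ 2| ≤ _
      rw [abs_mul, abs_of_nonneg (hq0 z), abs_of_nonneg (sq_nonneg _)]
      calc q z * (W z - py) ^ 2 ≤ q z * (C + |py|) ^ 2 :=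
            mul_le_mul_of_nonneg_left hb (hq0 z)
        _ = (C + |py|) ^ 2 * q z := mul_comm _ _
  have hmean : ∫ z, q z * (W z - py) ∂μ = 0 := by
    have heq : (fun z => q z * (W z - py)) = fun z => q z * W z - py * q z :=
      funext fun z => by ring
    rw [heq, integral_sub hqW_int (hq_int.const_mul py), hw, integral_const_mul, hq1]
    ring
  have hV0 : 0 ≤ V := integral_nonneg fun z => mul_nonneg (hq0 z) (sq_nonneg _)
  -- product space
  set π : Measure (Fin K → Z) := Measure.pi fun _ => μ with hπdef
  have hπvol : (volume : Measure (Fin K → Z)) = π := rfl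
  set F : Fin K → Fin K → Fin K → Z → ℝ := fun k j i z =>
    q z * ((if i = k then W z - py else 1) * (if i = j then W z - py else 1)) with hFdef
  have hFeq : ∀ (k j : Fin K) (zs : Fin K → Z),
      (∏ i, q (zs i)) * ((W (zs k) - py) * (W (zs j) - py)) = ∏ i, F k j i (zs i) := by
    intro k j zs
    simp only [hFdef]
    rw [Finset.prod_mul_distrib, Finset.prod_mul_distrib,
      Fintype.prod_ite_eq' k (fun i => W (zs i) - py),
      Fintype.prod_ite_eq' j (fun i => W (zs i) - py)]
  have hF_int : ∀ (k j i : Fin K), Integrable (F k j i) μ := by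
    intro k j i
    by_cases hik : i = k <;> by_cases hij : i = j
    · exact hD2_int.congr (Filter.Eventually.of_forall fun z => by
        simp only [hFdef, if_pos hik, if_pos hij]; ring)
    · exact hD_int.congr (Filter.Eventually.of_forall fun z => by
        simp only [hFdef, if_pos hik, if_neg hij]; ring)
    · exact hD_int.congr (Filter.Eventually.of_forall fun z => by
        simp only [hFdef, if_neg hik, if_pos hij]; ring)
    · exact hq_int.congr (Filter.Eventually.of_forall fun z => by
        simp only [hFdef, if_neg hik, if_neg hij]; ring)
  have hint_kj : ∀ k j : Fin K, Integrable
      (fun zs : Fin K → Z => (∏ i, q (zs i)) * ((W (zs k) - py) * (W (zs j) - py))) π := by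
    intro k j
    have : (fun zs : Fin K → Z => (∏ i, q (zs i)) * ((W (zs k) - py) * (W (zs j) - py)))
        = fun zs => ∏ i, F k j i (zs i) := funext (hFeq k j)
    rw [this, ← hπvol]
    exact Integrable.fintype_prod (f := F k j) fun i => hF_int k j i
  have moment : ∀ k j : Fin K,
      (∫ zs : Fin K → Z, (∏ i, q (zs i)) * ((W (zs k) - py) * (W (zs j) - py)) ∂π)
        = if k = j then V else 0 := by
    intro k j
    have h1 : (∫ zs : Fin K → Z, (∏ i, q (zs i)) * ((W (zs k) - py) * (W (zs j) - py)) ∂π)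
        = ∏ i, ∫ z, F k j i z ∂μ := by
      simp_rw [hFeq k j]
      rw [← hπvol]
      exact integral_fintype_prod_eq_prod (μ := fun _ => μ) (F k j)
    rw [h1]
    by_cases hkj : k = j
    · subst hkj
      rw [if_pos rfl]
      have h2 : ∀ i, (∫ z, F k k i z ∂μ) = if i = k then V else 1 := by
        intro i
        by_cases hik : i = k
        · rw [if_pos hik, hVdef]
          apply integral_congr_ae (Filter.Eventually.of_forall fun z => ?_)
          simp only [hFdef, if_pos hik]; ring
        · rw [if_neg hik]
          have : (fun z => F k k i z) = q := funext fun z => by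
            simp only [hFdef, if_neg hik]; ring
          rw [this, hq1]
      simp_rw [h2]
      exact Fintype.prod_ite_eq' k (fun _ => V)
    · rw [if_neg hkj]
      apply Finset.prod_eq_zero (Finset.mem_univ k)
      have : (fun z => F k j k z) = fun z => q z * (W z - py) := funext fun z => by
        simp [hFdef, hkj]
      rw [this, hmean]
  have hKne : (K:ℝ) ≠ 0 := hK0.ne'
  set Q : (Fin K → Z) → ℝ := fun zs => ∏ i, q (zs i) with hQdef
  set A : (Fin K → Z) → ℝ := fun zs => (1:ℝ) / (K:ℝ) * ∑ k, W (zs k) with hAdef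
  have hQ0 : ∀ zs, 0 ≤ Q zs := fun zs => Finset.prod_nonneg fun i _ => hq0 _
  have hA2_eq : ∀ zs, Q zs * (A zs - py) ^ 2
      = ((K:ℝ) ^ 2)⁻¹ * ∑ k, ∑ j, Q zs * ((W (zs k) - py) * (W (zs j) - py)) := by
    intro zs
    have hs : A zs - py = (1:ℝ) / (K:ℝ) * ∑ k, (W (zs k) - py) := by
      simp only [hAdef]
      rw [Finset.sum_sub_distrib, Finset.sum_const, Finset.card_univ, Fintype.card_fin,
        nsmul_eq_mul]
      field_simp
    have h2 : ∑ k, ∑ j, Q zs * ((W (zs k) - py) * (W (zs j) - py))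
        = Q zs * ((∑ k, (W (zs k) - py)) * (∑ j, (W (zs j) - py))) := by
      rw [Finset.sum_mul_sum, Finset.mul_sum]
      exact Finset.sum_congr rfl fun k _ => by rw [Finset.mul_sum]
    rw [hs, h2]
    ring
  have hVar : ∫ zs, Q zs * (A zs - py) ^ 2 ∂π = V / K := by
    rw [funext hA2_eq, integral_const_mul,
      integral_finset_sum _ fun k _ => integrable_finset_sum _ fun j _ => hint_kj k j,
      Finset.sum_congr rfl fun k _ => integral_finset_sum _ fun j _ => hint_kj k j]
    simp_rw [moment]
    rw [Finset.sum_congr rfl fun k _ => Fintype.sum_ite_eq k fun _ => V,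
      Finset.sum_const, Finset.card_univ, Fintype.card_fin, nsmul_eq_mul]
    field_simp
  have hQA2_int : Integrable (fun zs => Q zs * (A zs - py) ^ 2) π := by
    rw [funext hA2_eq]
    exact (integrable_finset_sum _ fun k _ =>
      integrable_finset_sum _ fun j _ => hint_kj k j).const_mul _
  have hQ_int : Integrable Q π :=
    MeasureTheory.Integrable.fintype_prod (𝕜 := ℝ) (f := fun _ : Fin K => q) fun _ => hq_int
  have hQ1 : ∫ zs, Q zs ∂π = 1 := by
    have h := MeasureTheory.integral_fintype_prod_eq_pow (𝕜 := ℝ) (ι := Fin K) q (μ := μ)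
    rw [hq1, one_pow] at h
    exact h
  have hGae : ∀ᵐ zs ∂π, ∀ k : Fin K, q (zs k) ≠ 0 → c ≤ W (zs k) ∧ W (zs k) ≤ C := by
    rw [MeasureTheory.ae_all_iff]
    intro k
    rw [ae_iff]
    exact Measure.pi_eval_preimage_null (fun _ : Fin K => μ) (i := k)
      (s := {z | ¬ (q z ≠ 0 → c ≤ W z ∧ W z ≤ C)}) (ae_iff.mp hbdd)
  have hAbound : ∀ zs : Fin K → Z,
      (∀ k, q (zs k) ≠ 0 → c ≤ W (zs k) ∧ W (zs k) ≤ C) → (∀ k, q (zs k) ≠ 0) →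
      c ≤ A zs ∧ A zs ≤ C := by
    intro zs hzs h0
    have hsum1 : (K:ℝ) * c ≤ ∑ k, W (zs k) := by
      calc (K:ℝ) * c = ∑ _k : Fin K, c := by
            rw [Finset.sum_const, Finset.card_univ, Fintype.card_fin, nsmul_eq_mul]
        _ ≤ _ := Finset.sum_le_sum fun k _ => (hzs k (h0 k)).1
    have hsum2 : ∑ k, W (zs k) ≤ (K:ℝ) * C := by
      calc ∑ k, W (zs k) ≤ ∑ _k : Fin K, C := Finset.sum_le_sum fun k _ => (hzs k (h0 k)).2
        _ = (K:ℝ) * C := by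
            rw [Finset.sum_const, Finset.card_univ, Fintype.card_fin, nsmul_eq_mul]
    constructor
    · calc c = 1 / (K:ℝ) * ((K:ℝ) * c) := by field_simp
        _ ≤ A zs := mul_le_mul_of_nonneg_left hsum1 (by positivity)
    · calc A zs ≤ 1 / (K:ℝ) * ((K:ℝ) * C) :=
            mul_le_mul_of_nonneg_left hsum2 (by positivity)
        _ = C := by field_simp
  set L : ℝ := max |Real.log c| |Real.log C| with hLdef
  have hL0 : 0 ≤ L := le_trans (abs_nonneg _) (le_max_left _ _)
  have hQm : Measurable Q := Finset.measurable_prod _ fun i _ => hqm.comp (measurable_pi_apply i)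
  have hAm : Measurable A :=
    (Finset.measurable_sum _ fun k _ => hWm.comp (measurable_pi_apply k)).const_mul _
  have hlog_int : Integrable (fun zs => Q zs * Real.log (A zs)) π := by
    apply Integrable.mono' (hQ_int.const_mul L)
      ((hQm.mul (Real.measurable_log.comp hAm)).aestronglyMeasurable)
    filter_upwards [hGae] with zs hzs
    by_cases h0 : ∀ k, q (zs k) ≠ 0
    · obtain ⟨ha1, ha2⟩ := hAbound zs hzs h0
      have hA0 : 0 < A zs := lt_of_lt_of_le hc ha1
      have hlog : |Real.log (A zs)| ≤ L := by
        rw [abs_le]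
        constructor
        · calc -L ≤ -|Real.log c| := neg_le_neg (le_max_left _ _)
            _ ≤ Real.log c := neg_abs_le _
            _ ≤ Real.log (A zs) := Real.log_le_log hc ha1
        · calc Real.log (A zs) ≤ Real.log C := Real.log_le_log hA0 ha2
            _ ≤ |Real.log C| := le_abs_self _
            _ ≤ L := le_max_right _ _
      rw [Real.norm_eq_abs]
      change |Q zs * Real.log (A zs)| ≤ _
      rw [abs_mul, abs_of_nonneg (hQ0 zs)]
      calc Q zs * |Real.log (A zs)| ≤ Q zs * L := mul_le_mul_of_nonneg_left hlog (hQ0 zs)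
        _ = L * Q zs := mul_comm _ _
    · push_neg at h0
      obtain ⟨k, hk⟩ := h0
      have hQz : Q zs = 0 := Finset.prod_eq_zero (Finset.mem_univ k) hk
      change ‖Q zs * Real.log (A zs)‖ ≤ _
      rw [hQz]
      simp
  have hdiff_int : Integrable (fun zs => Q zs * (Real.log (A zs) - Real.log py)) π := by
    apply (hlog_int.sub (hQ_int.mul_const (Real.log py))).congr
    exact Filter.Eventually.of_forall fun zs => by simp only [Pi.sub_apply]; ring
  have hsub : (∫ zs, Q zs * Real.log (A zs) ∂π) - Real.log py
      = ∫ zs, Q zs * (Real.log (A zs) - Real.log py) ∂π := by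
    have h1 : ∫ zs, Q zs * (Real.log (A zs) - Real.log py) ∂π
        = (∫ zs, Q zs * Real.log (A zs) ∂π) - ∫ zs, Q zs * Real.log py ∂π := by
      rw [← integral_sub hlog_int (hQ_int.mul_const _)]
      exact integral_congr_ae (Filter.Eventually.of_forall fun zs => by ring)
    rw [h1, integral_mul_const, hQ1, one_mul]
  calc |(∫ zs, Q zs * Real.log (A zs) ∂π) - Real.log py|
      = |∫ zs, Q zs * (Real.log (A zs) - Real.log py) ∂π| := by rw [hsub]
    _ ≤ ∫ zs, ‖Q zs * (Real.log (A zs) - Real.log py)‖ ∂π := by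
        rw [← Real.norm_eq_abs]
        exact norm_integral_le_integral_norm _
    _ ≤ ∫ zs, c'⁻¹ * (ε * Q zs + Q zs * (A zs - py) ^ 2 / ε) ∂π := by
        apply integral_mono_ae hdiff_int.norm
          (((hQ_int.const_mul ε).add (hQA2_int.div_const ε)).const_mul _)
        filter_upwards [hGae] with zs hzs
        by_cases h0 : ∀ k, q (zs k) ≠ 0
        · obtain ⟨ha1, ha2⟩ := hAbound zs hzs h0
          have hd : |Real.log (A zs) - Real.log py| ≤ |A zs - py| / c' :=
            log_lip hc' (le_trans (min_le_left _ _) ha1) (min_le_right _ _)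
          have he : |A zs - py| ≤ ε + (A zs - py) ^ 2 / ε := abs_le_eps hε
          have h3 : |Real.log (A zs) - Real.log py| ≤ (ε + (A zs - py) ^ 2 / ε) / c' :=
            le_trans hd ((div_le_div_iff_of_pos_right hc').mpr he)
          rw [Real.norm_eq_abs, abs_mul, abs_of_nonneg (hQ0 zs)]
          calc Q zs * |Real.log (A zs) - Real.log py|
              ≤ Q zs * ((ε + (A zs - py) ^ 2 / ε) / c') :=
                mul_le_mul_of_nonneg_left h3 (hQ0 zs)
            _ = c'⁻¹ * (ε * Q zs + Q zs * (A zs - py) ^ 2 / ε) := by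
                field_simp
        · push_neg at h0
          obtain ⟨k, hk⟩ := h0
          have hQz : Q zs = 0 := Finset.prod_eq_zero (Finset.mem_univ k) hk
          rw [hQz]
          simp
          exact mul_nonneg (inv_nonneg.mpr hc'.le) (add_nonneg (mul_nonneg hε.le (hQ0 zs))
            (div_nonneg (mul_nonneg (hQ0 zs) (sq_nonneg _)) hε.le))
    _ = c'⁻¹ * (ε + (V / K) / ε) := by
        rw [integral_const_mul, integral_add (hQ_int.const_mul ε) (hQA2_int.div_const ε),
          integral_const_mul, hQ1, integral_div, hVar]
        ring

theorem iw_main {Z : Type*} [MeasurableSpace Z] (μ : Measure Z) [SigmaFinite μ]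
    (q W : Z → ℝ) (py c C : ℝ)
    (hqm : Measurable q) (hWm : Measurable W)
    (hq0 : ∀ z, 0 ≤ q z) (hq1 : ∫ z, q z ∂μ = 1)
    (hpypos : 0 < py) (hw : ∫ z, q z * W z ∂μ = py)
    (hc : 0 < c)
    (hbdd : ∀ᵐ z ∂μ, q z ≠ 0 → c ≤ W z ∧ W z ≤ C) :
    Tendsto (fun K : ℕ =>
      ∫ zs : Fin K → Z, (∏ k, q (zs k)) * Real.log (((1:ℝ) / K) * ∑ k, W (zs k))
        ∂(Measure.pi fun _ => μ))
      atTop (nhds (Real.log py)) := by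
  have hC : c ≤ C := by
    by_contra h
    push_neg at h
    have hz : ∀ᵐ z ∂μ, q z = (0 : Z → ℝ) z := by
      filter_upwards [hbdd] with z hz
      by_contra hq
      obtain ⟨h1, h2⟩ := hz hq
      simp only [Pi.zero_apply] at hq
      linarith
    have h0 : ∫ z, q z ∂μ = 0 := integral_eq_zero_of_ae hz
    rw [h0] at hq1
    norm_num at hq1
  set V : ℝ := ∫ z, q z * (W z - py) ^ 2 ∂μ with hVdef
  set c' : ℝ := min c py with hc'def
  have hc' : 0 < c' := lt_min hc hpypos
  have hV0 : 0 ≤ V := integral_nonneg fun z => mul_nonneg (hq0 z) (sq_nonneg _)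
  rw [Metric.tendsto_atTop]
  intro δ hδ
  set ε : ℝ := c' * δ / 2 with hεdef
  have hε : 0 < ε := by positivity
  refine ⟨max 1 (⌈2 * V / (c' * ε * δ)⌉₊ + 1), fun K hKN => ?_⟩
  have hK1 : 1 ≤ K := le_trans (le_max_left _ _) hKN
  have hKpos : (0:ℝ) < K := by exact_mod_cast Nat.pos_of_ne_zero (by omega)
  have hKM : 2 * V / (c' * ε * δ) < (K:ℝ) := by
    have h1 : (⌈2 * V / (c' * ε * δ)⌉₊ + 1 : ℕ) ≤ K := le_trans (le_max_right _ _) hKN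
    calc 2 * V / (c' * ε * δ) ≤ (⌈2 * V / (c' * ε * δ)⌉₊ : ℝ) := Nat.le_ceil _
      _ < ((⌈2 * V / (c' * ε * δ)⌉₊ + 1 : ℕ) : ℝ) := by push_cast; linarith
      _ ≤ K := by exact_mod_cast h1
  rw [Real.dist_eq]
  have hb := key_est μ q W py c C ε hqm hWm hq0 hq1 hpypos hw hc hC hbdd hε K hK1
  apply lt_of_le_of_lt hb
  have key2 : V / (K:ℝ) / ε < c' * δ / 2 := by
    rw [div_lt_iff₀ hε, div_lt_iff₀ hKpos]
    have h2 : 2 * V < (K:ℝ) * (c' * ε * δ) := (div_lt_iff₀ (by positivity)).mp hKM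
    nlinarith
  calc c'⁻¹ * (ε + V / (K:ℝ) / ε) < c'⁻¹ * (ε + c' * δ / 2) := by
        apply mul_lt_mul_of_pos_left (by linarith) (inv_pos.mpr hc')
    _ = δ := by
        rw [hεdef]
        field_simp
        norm_num

/-- The IW bound converges to log p(y) as K → ∞, assuming the weights
    w = p/q are (q-almost surely) bounded between c > 0 and C. -/
theorem stmt4 {Z : Type*} [MeasurableSpace Z] (μ : Measure Z) [SigmaFinite μ]
    (q p : Z → ℝ) (py c C : ℝ)
    (hq0 : ∀ z, 0 ≤ q z) (hq1 : ∫ z, q z ∂μ = 1)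
    (hp0 : ∀ z, 0 ≤ p z)
    (hpy : ∫ z, p z ∂μ = py) (hpypos : 0 < py)
    (hw : ∫ z, q z * (p z / q z) ∂μ = py)
    (hc : 0 < c)
    (hbdd : ∀ᵐ z ∂μ, q z ≠ 0 → c ≤ p z / q z ∧ p z / q z ≤ C) :
    Tendsto (fun K : ℕ =>
      ∫ zs : Fin K → Z,
        (∏ k, q (zs k)) * Real.log (((1 : ℝ) / K) * ∑ k, p (zs k) / q (zs k))
        ∂(Measure.pi fun _ => μ))
      atTop (nhds (Real.log py)) := by
  have hq_int : Integrable q μ := by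
    by_contra h
    rw [integral_undef h] at hq1
    norm_num at hq1
  have hp_int : Integrable p μ := by
    by_contra h
    rw [integral_undef h] at hpy
    linarith
  set q' : Z → ℝ := fun z => max (hq_int.aestronglyMeasurable.mk q z) 0 with hq'def
  set p' : Z → ℝ := fun z => max (hp_int.aestronglyMeasurable.mk p z) 0 with hp'def
  have hq'm : Measurable q' :=
    hq_int.aestronglyMeasurable.stronglyMeasurable_mk.measurable.max measurable_const
  have hp'm : Measurable p' :=
    hp_int.aestronglyMeasurable.stronglyMeasurable_mk.measurable.max measurable_const
  have hq'eq : q' =ᵐ[μ] q := by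
    filter_upwards [hq_int.aestronglyMeasurable.ae_eq_mk] with z h
    simp only [hq'def, ← h]
    exact max_eq_left (hq0 z)
  have hp'eq : p' =ᵐ[μ] p := by
    filter_upwards [hp_int.aestronglyMeasurable.ae_eq_mk] with z h
    simp only [hp'def, ← h]
    exact max_eq_left (hp0 z)
  have hmain := iw_main μ q' (fun z => p' z / q' z) py c C hq'm (hp'm.div hq'm)
    (fun z => le_max_right _ _)
    (by rw [integral_congr_ae hq'eq, hq1])
    hpypos
    (by
      rw [← hw]
      apply integral_congr_ae
      filter_upwards [hq'eq, hp'eq] with z h1 h2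
      rw [h1, h2])
    hc
    (by
      filter_upwards [hbdd, hq'eq, hp'eq] with z hb h1 h2
      intro hq'
      rw [h1, h2]
      exact hb (h1 ▸ hq'))
  apply hmain.congr
  intro K
  apply integral_congr_ae
  have hae : ∀ᵐ zs ∂(Measure.pi fun _ : Fin K => μ),
      ∀ k : Fin K, q' (zs k) = q (zs k) ∧ p' (zs k) = p (zs k) := by
    rw [MeasureTheory.ae_all_iff]
    intro k
    rw [ae_iff]
    exact Measure.pi_eval_preimage_null (fun _ : Fin K => μ) (i := k)
      (s := {z | ¬ (q' z = q z ∧ p' z = p z)}) (ae_iff.mp (hq'eq.and hp'eq))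
  filter_upwards [hae] with zs hzs
  have h1 : ∏ k, q' (zs k) = ∏ k, q (zs k) := Finset.prod_congr rfl fun k _ => (hzs k).1
  have h2 : ∑ k, p' (zs k) / q' (zs k) = ∑ k, p (zs k) / q (zs k) :=
    Finset.sum_congr rfl fun k _ => by rw [(hzs k).1, (hzs k).2]
  show (∏ k, q' (zs k)) * Real.log ((1:ℝ) / K * ∑ k, p' (zs k) / q' (zs k)) = _
  rw [h1, h2]
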